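/- arXiv:2112.15504 — 2 statements merged into one kernel-verified Lean document; each statement's English description precedes it below -/
import Mathlib

section
/- Let p > 0, τ > 0, s > 0 and α > 0. For every measurable function F : ℝⁿ → ℂ, (∫_{ℝⁿ} |1 − exp(−τ (α|ξ|)^s)|² |F(ξ)|² dξ)^{1/2} ≤ τ^{min(p,s)/s} · α^{min(p,s)} · (∫_{ℝⁿ} (1+|ξ|²)^p |F(ξ)|² dξ)^{1/2}. -/
open MeasureTheory

theorem stmt_6 (n : ℕ) (hn : 1 ≤ n) (p τ s α : ℝ) (hp : 0 < p) (hτ : 0 < τ)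
    (hs : 0 < s) (hα : 0 < α)
    (F : EuclideanSpace ℝ (Fin n) → ℂ) (hF : Measurable F) :
    (∫⁻ ξ : EuclideanSpace ℝ (Fin n),
        ENNReal.ofReal (|1 - Real.exp (-(τ * (α * ‖ξ‖) ^ s))| ^ 2 * ‖F ξ‖ ^ 2))
          ^ (1 / 2 : ℝ)
      ≤ ENNReal.ofReal (τ ^ (min p s / s) * α ^ min p s) *
        (∫⁻ ξ : EuclideanSpace ℝ (Fin n),
          ENNReal.ofReal ((1 + ‖ξ‖ ^ 2) ^ p * ‖F ξ‖ ^ 2)) ^ (1 / 2 : ℝ) := by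
  set m := min p s with hm
  set C := τ ^ (m / s) * α ^ m with hC
  have hCpos : 0 < C := mul_pos (Real.rpow_pos_of_pos hτ _) (Real.rpow_pos_of_pos hα _)
  have hmpos : 0 < m := lt_min hp hs
  have hθpos : 0 < m / s := div_pos hmpos hs
  have hθ1 : m / s ≤ 1 := by rw [div_le_one hs]; exact min_le_right _ _
  -- pointwise bound
  have key : ∀ ξ : EuclideanSpace ℝ (Fin n),
      |1 - Real.exp (-(τ * (α * ‖ξ‖) ^ s))| ^ 2 * ‖F ξ‖ ^ 2
        ≤ C ^ 2 * ((1 + ‖ξ‖ ^ 2) ^ p * ‖F ξ‖ ^ 2) := by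
    intro ξ
    set x := τ * (α * ‖ξ‖) ^ s with hx
    have hαξ : 0 ≤ α * ‖ξ‖ := mul_nonneg hα.le (norm_nonneg _)
    have hxnn : 0 ≤ x := mul_nonneg hτ.le (Real.rpow_nonneg hαξ _)
    have h1 : |1 - Real.exp (-x)| = 1 - Real.exp (-x) := by
      rw [abs_of_nonneg]
      have := Real.exp_le_exp.mpr (neg_nonpos_of_nonneg hxnn)
      simp only [Real.exp_zero] at this
      linarith
    have h2 : 1 - Real.exp (-x) ≤ x ^ (m / s) := by
      rcases eq_or_lt_of_le hxnn with h0 | hx0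
      · rw [← h0, Real.zero_rpow (ne_of_gt hθpos)]; simp
      · rcases le_or_gt x 1 with hx1 | hx1
        · have hle : 1 - Real.exp (-x) ≤ x := by
            have := Real.add_one_le_exp (-x); linarith
          calc 1 - Real.exp (-x) ≤ x := hle
            _ = x ^ (1 : ℝ) := (Real.rpow_one x).symm
            _ ≤ x ^ (m / s) := Real.rpow_le_rpow_of_exponent_ge hx0 hx1 hθ1
        · have h3 : 1 - Real.exp (-x) ≤ 1 := by
            have := (Real.exp_pos (-x)).le; linarith
          have h4 : (1 : ℝ) ≤ x ^ (m / s) := Real.one_le_rpow hx1.le hθpos.le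
          linarith
    have h5 : x ^ (m / s) = τ ^ (m / s) * (α * ‖ξ‖) ^ m := by
      rw [hx, Real.mul_rpow hτ.le (Real.rpow_nonneg hαξ _),
        ← Real.rpow_mul hαξ]
      congr 1
      field_simp
    have h6 : (α * ‖ξ‖) ^ m ≤ α ^ m * (1 + ‖ξ‖ ^ 2) ^ (p / 2) := by
      rw [Real.mul_rpow hα.le (norm_nonneg _)]
      apply mul_le_mul_of_nonneg_left ?_ (Real.rpow_nonneg hα.le m)
      calc ‖ξ‖ ^ m = (‖ξ‖ ^ 2) ^ (m / 2) := by
            rw [← Real.rpow_natCast ‖ξ‖ 2, ← Real.rpow_mul (norm_nonneg _)]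
            congr 1
            push_cast
            ring
        _ ≤ (1 + ‖ξ‖ ^ 2) ^ (m / 2) :=
            Real.rpow_le_rpow (sq_nonneg _) (by linarith [sq_nonneg ‖ξ‖]) (by positivity)
        _ ≤ (1 + ‖ξ‖ ^ 2) ^ (p / 2) := by
            apply Real.rpow_le_rpow_of_exponent_le
            · nlinarith [sq_nonneg ‖ξ‖]
            · have : m ≤ p := min_le_left _ _
              linarith
    have h7 : 1 - Real.exp (-x) ≤ C * (1 + ‖ξ‖ ^ 2) ^ (p / 2) := by
      calc 1 - Real.exp (-x) ≤ x ^ (m / s) := h2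
        _ = τ ^ (m / s) * (α * ‖ξ‖) ^ m := h5
        _ ≤ τ ^ (m / s) * (α ^ m * (1 + ‖ξ‖ ^ 2) ^ (p / 2)) :=
            mul_le_mul_of_nonneg_left h6 (Real.rpow_nonneg hτ.le _)
        _ = C * (1 + ‖ξ‖ ^ 2) ^ (p / 2) := by ring
    have h8 : |1 - Real.exp (-x)| ^ 2 ≤ C ^ 2 * (1 + ‖ξ‖ ^ 2) ^ p := by
      have hb : 0 ≤ 1 + ‖ξ‖ ^ 2 := by positivity
      calc |1 - Real.exp (-x)| ^ 2 = |1 - Real.exp (-x)| * |1 - Real.exp (-x)| := sq _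
        _ ≤ (C * (1 + ‖ξ‖ ^ 2) ^ (p / 2)) * (C * (1 + ‖ξ‖ ^ 2) ^ (p / 2)) := by
            apply mul_self_le_mul_self (abs_nonneg _)
            rw [h1]; exact h7
        _ = C ^ 2 * ((1 + ‖ξ‖ ^ 2) ^ (p / 2) * (1 + ‖ξ‖ ^ 2) ^ (p / 2)) := by ring
        _ = C ^ 2 * (1 + ‖ξ‖ ^ 2) ^ p := by
            rw [← Real.rpow_add' hb (ne_of_gt (by linarith : (0:ℝ) < p / 2 + p / 2))]
            norm_num
    calc |1 - Real.exp (-x)| ^ 2 * ‖F ξ‖ ^ 2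
        ≤ (C ^ 2 * (1 + ‖ξ‖ ^ 2) ^ p) * ‖F ξ‖ ^ 2 := by
          gcongr
      _ = C ^ 2 * ((1 + ‖ξ‖ ^ 2) ^ p * ‖F ξ‖ ^ 2) := by ring
  -- integral bound
  have step : (∫⁻ ξ : EuclideanSpace ℝ (Fin n),
      ENNReal.ofReal (|1 - Real.exp (-(τ * (α * ‖ξ‖) ^ s))| ^ 2 * ‖F ξ‖ ^ 2))
      ≤ ENNReal.ofReal (C ^ 2) *
        ∫⁻ ξ : EuclideanSpace ℝ (Fin n),
          ENNReal.ofReal ((1 + ‖ξ‖ ^ 2) ^ p * ‖F ξ‖ ^ 2) := by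
    rw [← lintegral_const_mul' _ _ ENNReal.ofReal_ne_top]
    apply lintegral_mono
    intro ξ
    dsimp only
    rw [← ENNReal.ofReal_mul (by positivity)]
    exact ENNReal.ofReal_le_ofReal (key ξ)
  calc (∫⁻ ξ : EuclideanSpace ℝ (Fin n),
        ENNReal.ofReal (|1 - Real.exp (-(τ * (α * ‖ξ‖) ^ s))| ^ 2 * ‖F ξ‖ ^ 2))
          ^ (1 / 2 : ℝ)
      ≤ (ENNReal.ofReal (C ^ 2) *
          ∫⁻ ξ : EuclideanSpace ℝ (Fin n),
            ENNReal.ofReal ((1 + ‖ξ‖ ^ 2) ^ p * ‖F ξ‖ ^ 2)) ^ (1 / 2 : ℝ) := by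
        exact ENNReal.rpow_le_rpow step (by norm_num)
    _ = ENNReal.ofReal C *
        (∫⁻ ξ : EuclideanSpace ℝ (Fin n),
          ENNReal.ofReal ((1 + ‖ξ‖ ^ 2) ^ p * ‖F ξ‖ ^ 2)) ^ (1 / 2 : ℝ) := by
        rw [ENNReal.mul_rpow_of_nonneg _ _ (by norm_num : (0:ℝ) ≤ 1/2),
          ENNReal.ofReal_rpow_of_nonneg (by positivity) (by norm_num : (0:ℝ) ≤ 1/2)]
        congr 2
        rw [← Real.rpow_natCast C 2, ← Real.rpow_mul hCpos.le]
        norm_num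
end

section
/- Let n ≥ 1, τ > 0, s > 0, θ > 1 and δ > 0, and let Gδ ∈ L²(ℝⁿ) with 0 < θ δ < ‖Gδ‖_{L²}. Then the function v : (0, ∞) → ℝ defined by v(α) = ‖(1 − exp(−τ (α|·|)^s)) Gδ‖_{L²} is strictly increasing and continuous, satisfies v(α) → 0 as α → 0⁺ and v(α) → ‖Gδ‖_{L²} as α → ∞, and consequently there exists a unique α > 0 with ‖(1 − exp(−τ (α|·|)^s)) Gδ(·)‖_{L²} = θ δ. -/
open MeasureTheory Filter
open scoped ENNReal Topology

set_option maxHeartbeats 1000000 in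
theorem stmt_17 (n : ℕ) (hn : 1 ≤ n) (τ s θ δ : ℝ) (hτ : 0 < τ) (hs : 0 < s)
    (hθ : 1 < θ) (hδ : 0 < δ)
    (Gδ : EuclideanSpace ℝ (Fin n) → ℂ)
    (hG : MemLp Gδ 2 (volume : Measure (EuclideanSpace ℝ (Fin n))))
    (hratio : θ * δ < (eLpNorm Gδ 2 volume).toReal) :
    let v : ℝ → ℝ := fun α =>
      (eLpNorm (fun ξ => ((1 - Real.exp (-(τ * (α * ‖ξ‖) ^ s)) : ℝ) : ℂ) * Gδ ξ)
        2 volume).toReal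
    StrictMonoOn v (Set.Ioi 0) ∧ ContinuousOn v (Set.Ioi 0) ∧
      Tendsto v (nhdsWithin 0 (Set.Ioi 0)) (nhds 0) ∧
      Tendsto v atTop (nhds ((eLpNorm Gδ 2 volume).toReal)) ∧
      ∃! α : ℝ, 0 < α ∧ v α = θ * δ := by
  intro v
  haveI : Nontrivial (EuclideanSpace ℝ (Fin n)) := by
    apply Module.nontrivial_of_finrank_pos (R := ℝ)
    rw [finrank_euclideanSpace_fin]; omega
  have hθδ : 0 < θ * δ := mul_pos (lt_trans one_pos hθ) hδ
  set φ : ℝ → EuclideanSpace ℝ (Fin n) → ℝ := fun α ξ => 1 - Real.exp (-(τ * (α * ‖ξ‖) ^ s)) with hφdef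
  set F : ℝ → EuclideanSpace ℝ (Fin n) → ℝ := fun α ξ => (φ α ξ) ^ 2 * ‖Gδ ξ‖ ^ 2 with hFdef
  set I : ℝ → ℝ := fun α => ∫ ξ, F α ξ with hIdef
  have hGmeas : AEStronglyMeasurable Gδ volume := hG.1
  -- ‖G‖² integrable
  have e : ∀ x : ℝ, x ^ ((2 : ℝ≥0∞)).toReal = x ^ 2 := by
    intro x
    rw [ENNReal.toReal_ofNat, show ((2:ℝ)) = ((2:ℕ):ℝ) by norm_num, Real.rpow_natCast]
  have hG2 : Integrable (fun ξ => ‖Gδ ξ‖ ^ 2) volume := by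
    have h := hG.integrable_norm_rpow (by norm_num) (by norm_num)
    exact h.congr (Eventually.of_forall fun ξ => e _)
  have hG2meas : AEStronglyMeasurable (fun ξ => ‖Gδ ξ‖ ^ 2) volume :=
    (hGmeas.norm.aemeasurable.pow_const 2).aestronglyMeasurable
  have hφcont : ∀ α : ℝ, Continuous (φ α) := by
    intro α
    have h1 : Continuous fun ξ : EuclideanSpace ℝ (Fin n) => α * ‖ξ‖ :=
      continuous_const.mul continuous_norm
    have h2 : Continuous fun ξ : EuclideanSpace ℝ (Fin n) => (α * ‖ξ‖) ^ s :=
      (Real.continuous_rpow_const hs.le).comp h1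
    exact continuous_const.sub (Real.continuous_exp.comp ((continuous_const.mul h2).neg))
  have hφcont' : ∀ ξ : EuclideanSpace ℝ (Fin n), Continuous fun α : ℝ => φ α ξ := by
    intro ξ
    have h1 : Continuous fun α : ℝ => α * ‖ξ‖ := continuous_id.mul continuous_const
    have h2 : Continuous fun α : ℝ => (α * ‖ξ‖) ^ s :=
      (Real.continuous_rpow_const hs.le).comp h1
    exact continuous_const.sub (Real.continuous_exp.comp ((continuous_const.mul h2).neg))
  -- bounds on φ for nonneg α
  have hφ0 : ∀ α : ℝ, 0 ≤ α → ∀ ξ : EuclideanSpace ℝ (Fin n), 0 ≤ φ α ξ := by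
    intro α hα ξ
    have h1 : (0:ℝ) ≤ τ * (α * ‖ξ‖) ^ s :=
      mul_nonneg hτ.le (Real.rpow_nonneg (mul_nonneg hα (norm_nonneg _)) s)
    have := Real.exp_le_one_iff.mpr (by linarith : -(τ * (α * ‖ξ‖) ^ s) ≤ 0)
    simp only [hφdef]; linarith
  have hφ1 : ∀ α : ℝ, ∀ ξ : EuclideanSpace ℝ (Fin n), φ α ξ < 1 := by
    intro α ξ
    have := Real.exp_pos (-(τ * (α * ‖ξ‖) ^ s))
    simp only [hφdef]; linarith
  -- monotonicity of φ
  have hφmono : ∀ a b : ℝ, 0 ≤ a → a ≤ b → ∀ ξ : EuclideanSpace ℝ (Fin n), φ a ξ ≤ φ b ξ := by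
    intro a b ha hab ξ
    have h1 : (a * ‖ξ‖) ^ s ≤ (b * ‖ξ‖) ^ s :=
      Real.rpow_le_rpow (mul_nonneg ha (norm_nonneg _))
        (mul_le_mul_of_nonneg_right hab (norm_nonneg _)) hs.le
    have h2 : Real.exp (-(τ * (b * ‖ξ‖) ^ s)) ≤ Real.exp (-(τ * (a * ‖ξ‖) ^ s)) :=
      Real.exp_le_exp.mpr (by nlinarith)
    simp only [hφdef]; linarith
  have hφsmono : ∀ a b : ℝ, 0 ≤ a → a < b → ∀ ξ : EuclideanSpace ℝ (Fin n), ξ ≠ 0 → φ a ξ < φ b ξ := by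
    intro a b ha hab ξ hξ
    have hξ' : 0 < ‖ξ‖ := norm_pos_iff.mpr hξ
    have h1 : (a * ‖ξ‖) ^ s < (b * ‖ξ‖) ^ s :=
      Real.rpow_lt_rpow (mul_nonneg ha (norm_nonneg _))
        (mul_lt_mul_of_pos_right hab hξ') hs
    have h2 : Real.exp (-(τ * (b * ‖ξ‖) ^ s)) < Real.exp (-(τ * (a * ‖ξ‖) ^ s)) :=
      Real.exp_lt_exp.mpr (by nlinarith)
    simp only [hφdef]; linarith
  -- measurability and integrability of F
  have hFmeas : ∀ α : ℝ, AEStronglyMeasurable (F α) volume := fun α =>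
    (((hφcont α).pow 2).aestronglyMeasurable).mul hG2meas
  have hFbound : ∀ α : ℝ, 0 ≤ α → ∀ ξ : EuclideanSpace ℝ (Fin n), ‖F α ξ‖ ≤ ‖Gδ ξ‖ ^ 2 := by
    intro α hα ξ
    have h0 := hφ0 α hα ξ
    have h1 := (hφ1 α ξ).le
    have hφsq : (φ α ξ) ^ 2 ≤ 1 := by nlinarith
    simp only [hFdef, Real.norm_eq_abs]
    rw [abs_of_nonneg (by positivity)]
    calc φ α ξ ^ 2 * ‖Gδ ξ‖ ^ 2 ≤ 1 * ‖Gδ ξ‖ ^ 2 :=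
          mul_le_mul_of_nonneg_right hφsq (sq_nonneg _)
      _ = ‖Gδ ξ‖ ^ 2 := one_mul _
  have hFint : ∀ α : ℝ, 0 ≤ α → Integrable (F α) volume := by
    intro α hα
    refine hG2.mono (hFmeas α) (Eventually.of_forall fun ξ => ?_)
    rw [Real.norm_eq_abs (‖Gδ ξ‖ ^ 2), abs_of_nonneg (by positivity)]
    exact hFbound α hα ξ
  have hFnonneg : ∀ α : ℝ, ∀ ξ : EuclideanSpace ℝ (Fin n), 0 ≤ F α ξ := fun α ξ => by positivity
  -- I is nonneg
  have hInonneg : ∀ α : ℝ, 0 ≤ I α := fun α =>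
    integral_nonneg fun ξ => hFnonneg α ξ
  -- the key identity : v α = sqrt (I α) for α ≥ 0
  have hv : ∀ α : ℝ, 0 ≤ α → v α = Real.sqrt (I α) := by
    intro α hα
    have hmem : MemLp (fun ξ => ((φ α ξ : ℝ) : ℂ) * Gδ ξ) 2 volume := by
      refine hG.of_le ?_ (Eventually.of_forall fun ξ => ?_)
      · exact ((Complex.continuous_ofReal.comp (hφcont α)).aestronglyMeasurable).mul hGmeas
      · rw [norm_mul, Complex.norm_real, Real.norm_eq_abs,
          abs_of_nonneg (hφ0 α hα ξ)]
        nlinarith [norm_nonneg (Gδ ξ), (hφ1 α ξ).le, hφ0 α hα ξ]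
    have := hmem.eLpNorm_eq_integral_rpow_norm (by norm_num) (by norm_num)
    show (eLpNorm (fun ξ => ((φ α ξ : ℝ) : ℂ) * Gδ ξ) 2 volume).toReal = _
    rw [this, ENNReal.toReal_ofReal (by positivity)]
    have hint : (∫ ξ, ‖((φ α ξ : ℝ) : ℂ) * Gδ ξ‖ ^ ((2:ℝ≥0∞)).toReal) = I α := by
      refine integral_congr_ae (Eventually.of_forall fun ξ => ?_)
      simp only [e, norm_mul, Complex.norm_real, Real.norm_eq_abs]
      rw [abs_of_nonneg (hφ0 α hα ξ)]
      simp [hFdef, mul_pow]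
    rw [hint, Real.sqrt_eq_rpow, ENNReal.toReal_ofNat]
    norm_num
  -- strict monotonicity of I
  have hGpos : 0 < volume {ξ : EuclideanSpace ℝ (Fin n) | Gδ ξ ≠ 0} := by
    by_contra h
    push_neg at h
    have h0 : volume {ξ : EuclideanSpace ℝ (Fin n) | Gδ ξ ≠ 0} = 0 := le_antisymm h zero_le
    have : Gδ =ᵐ[volume] 0 := by
      rw [Filter.EventuallyEq, ae_iff]
      simpa using h0
    have : eLpNorm Gδ 2 volume = 0 := by
      rw [eLpNorm_congr_ae this, eLpNorm_zero]
    rw [this] at hratio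
    simp at hratio
    linarith
  have hImono : StrictMonoOn I (Set.Ioi 0) := by
    intro a ha b hb hab
    simp only [Set.mem_Ioi] at ha hb
    have hdiff : Integrable (fun ξ => F b ξ - F a ξ) volume :=
      (hFint b hb.le).sub (hFint a ha.le)
    have hnonneg : 0 ≤ᵐ[volume] fun ξ => F b ξ - F a ξ := by
      refine Eventually.of_forall fun ξ => ?_
      have hm := hφmono a b ha.le hab.le ξ
      have h0 := hφ0 a ha.le ξ
      have hsq : φ a ξ ^ 2 ≤ φ b ξ ^ 2 := by nlinarith
      simp only [hFdef, Pi.zero_apply, sub_nonneg]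
      exact mul_le_mul_of_nonneg_right hsq (sq_nonneg _)
    have hsupp : 0 < volume (Function.support fun ξ => F b ξ - F a ξ) := by
      have hsub : {ξ : EuclideanSpace ℝ (Fin n) | Gδ ξ ≠ 0} \ {0} ⊆ Function.support fun ξ => F b ξ - F a ξ := by
        rintro ξ ⟨hξG, hξ0⟩
        have hξ0' : ξ ≠ 0 := hξ0
        have h1 := hφsmono a b ha.le hab ξ hξ0'
        have h0 := hφ0 a ha.le ξ
        have hGn : 0 < ‖Gδ ξ‖ ^ 2 := pow_pos (norm_pos_iff.mpr hξG) 2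
        simp only [Function.mem_support, hFdef]
        have : (φ a ξ) ^ 2 < (φ b ξ) ^ 2 := by nlinarith
        nlinarith
      calc 0 < volume ({ξ : EuclideanSpace ℝ (Fin n) | Gδ ξ ≠ 0} \ {0}) := by
            rwa [measure_diff_null (measure_singleton _)]
        _ ≤ _ := measure_mono hsub
    have hpos : 0 < ∫ ξ, (F b ξ - F a ξ) :=
      (integral_pos_iff_support_of_nonneg_ae hnonneg hdiff).mpr hsupp
    have : I b - I a = ∫ ξ, (F b ξ - F a ξ) := by
      rw [integral_sub (hFint b hb.le) (hFint a ha.le)]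
    linarith
  -- continuity of I on Ioi 0
  have hIcont : ContinuousOn I (Set.Ioi 0) := by
    intro α₀ hα₀
    simp only [Set.mem_Ioi] at hα₀
    apply ContinuousAt.continuousWithinAt
    apply continuousAt_of_dominated (bound := fun ξ => ‖Gδ ξ‖ ^ 2)
    · exact Eventually.of_forall fun α => hFmeas α
    · filter_upwards [eventually_gt_nhds hα₀] with α hα
      exact Eventually.of_forall fun ξ => hFbound α hα.le ξ
    · exact hG2
    · refine Eventually.of_forall fun ξ => ?_
      exact (((hφcont' ξ).pow 2).mul continuous_const).continuousAt
  -- I tends to 0 at 0⁺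
  have hI0 : Tendsto I (𝓝[>] (0:ℝ)) (𝓝 0) := by
    have key : Tendsto I (𝓝[>] (0:ℝ)) (𝓝 (∫ _ξ : EuclideanSpace ℝ (Fin n), (0:ℝ))) := by
      apply tendsto_integral_filter_of_dominated_convergence (bound := fun ξ => ‖Gδ ξ‖ ^ 2)
      · exact Eventually.of_forall fun α => hFmeas α
      · filter_upwards [self_mem_nhdsWithin] with α hα
        exact Eventually.of_forall fun ξ => hFbound α (le_of_lt hα) ξ
      · exact hG2
      · refine Eventually.of_forall fun ξ => ?_
        have h0 : F 0 ξ = 0 := by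
          simp [hFdef, hφdef, Real.zero_rpow hs.ne', zero_mul, Real.exp_zero]
        have hc : ContinuousAt (fun α => F α ξ) 0 :=
          (((hφcont' ξ).pow 2).mul continuous_const).continuousAt
        have ht : Tendsto (fun α => F α ξ) (𝓝[>] (0:ℝ)) (𝓝 (F 0 ξ)) :=
          hc.tendsto.mono_left nhdsWithin_le_nhds
        rwa [h0] at ht
    rwa [integral_zero] at key

  -- I tends to ∫‖G‖² at ∞
  set J : ℝ := ∫ ξ, ‖Gδ ξ‖ ^ 2 with hJdef
  have hIJ : Tendsto I atTop (𝓝 J) := by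
    apply tendsto_integral_filter_of_dominated_convergence (bound := fun ξ => ‖Gδ ξ‖ ^ 2)
    · exact Eventually.of_forall fun α => hFmeas α
    · filter_upwards [eventually_ge_atTop (0:ℝ)] with α hα
      exact Eventually.of_forall fun ξ => hFbound α hα ξ
    · exact hG2
    · have hae : ∀ᵐ ξ : EuclideanSpace ℝ (Fin n) ∂volume, ξ ≠ 0 := by
        rw [ae_iff]
        simp [Set.setOf_eq_eq_singleton, measure_singleton]
      filter_upwards [hae] with ξ hξ
      have hξ' : 0 < ‖ξ‖ := norm_pos_iff.mpr hξ
      have h1 : Tendsto (fun α : ℝ => α * ‖ξ‖) atTop atTop :=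
        Tendsto.atTop_mul_const hξ' tendsto_id
      have h2 : Tendsto (fun α : ℝ => (α * ‖ξ‖) ^ s) atTop atTop :=
        (tendsto_rpow_atTop hs).comp h1
      have h3 : Tendsto (fun α : ℝ => τ * (α * ‖ξ‖) ^ s) atTop atTop :=
        Tendsto.const_mul_atTop hτ h2
      have h4 : Tendsto (fun α : ℝ => Real.exp (-(τ * (α * ‖ξ‖) ^ s))) atTop (𝓝 0) :=
        Real.tendsto_exp_neg_atTop_nhds_zero.comp h3
      have h5 : Tendsto (fun α : ℝ => φ α ξ) atTop (𝓝 1) := by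
        have := (tendsto_const_nhds (x := (1:ℝ)) (f := atTop)).sub h4
        simpa using this
      have h6 : Tendsto (fun α : ℝ => F α ξ) atTop (𝓝 ((1:ℝ) ^ 2 * ‖Gδ ξ‖ ^ 2)) :=
        (h5.pow 2).mul tendsto_const_nhds
      simpa using h6
  -- sqrt J = ‖Gδ‖
  have hJv : Real.sqrt J = (eLpNorm Gδ 2 volume).toReal := by
    have := hG.eLpNorm_eq_integral_rpow_norm (by norm_num) (by norm_num)
    rw [this, ENNReal.toReal_ofReal (by positivity)]
    have hint : (∫ ξ, ‖Gδ ξ‖ ^ ((2:ℝ≥0∞)).toReal) = J := by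
      exact integral_congr_ae (Eventually.of_forall fun ξ => e _)
    rw [hint, Real.sqrt_eq_rpow, ENNReal.toReal_ofNat]
    norm_num
  -- now the five conclusions
  have hvmono : StrictMonoOn v (Set.Ioi 0) := by
    intro a ha b hb hab
    rw [hv a (le_of_lt ha), hv b (le_of_lt hb)]
    exact Real.sqrt_lt_sqrt (hInonneg a) (hImono ha hb hab)
  have hvcont : ContinuousOn v (Set.Ioi 0) := by
    have : ContinuousOn (fun α => Real.sqrt (I α)) (Set.Ioi 0) :=
      Real.continuous_sqrt.comp_continuousOn hIcont
    exact this.congr fun α hα => hv α (le_of_lt hα)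
  have hv0 : Tendsto v (𝓝[>] (0:ℝ)) (𝓝 0) := by
    have : Tendsto (fun α => Real.sqrt (I α)) (𝓝[>] (0:ℝ)) (𝓝 0) := by
      have h := (Real.continuous_sqrt.tendsto 0).comp hI0
      rwa [Real.sqrt_zero] at h
    refine this.congr' ?_
    filter_upwards [self_mem_nhdsWithin] with α hα
    exact (hv α (le_of_lt hα)).symm
  have hvtop : Tendsto v atTop (𝓝 ((eLpNorm Gδ 2 volume).toReal)) := by
    have : Tendsto (fun α => Real.sqrt (I α)) atTop (𝓝 (Real.sqrt J)) :=
      (Real.continuous_sqrt.tendsto J).comp hIJ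
    rw [hJv] at this
    refine this.congr' ?_
    filter_upwards [eventually_ge_atTop (0:ℝ)] with α hα
    exact (hv α hα).symm
  refine ⟨hvmono, hvcont, hv0, hvtop, ?_⟩
  -- existence
  have hex : ∃ α : ℝ, 0 < α ∧ v α = θ * δ := by
    have hsmall : ∀ᶠ α in 𝓝[>] (0:ℝ), v α < θ * δ :=
      hv0.eventually_lt_const hθδ
    obtain ⟨a, haθ, ha⟩ := (hsmall.and self_mem_nhdsWithin).exists
    replace ha : (0:ℝ) < a := ha
    have hbig : ∀ᶠ α in atTop, θ * δ < v α :=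
      hvtop.eventually_const_lt hratio
    obtain ⟨b, hbθ, hba⟩ := (hbig.and (eventually_gt_atTop a)).exists
    have hb : 0 < b := lt_trans ha hba
    have hIcc : Set.Icc a b ⊆ Set.Ioi 0 := fun x hx => lt_of_lt_of_le ha hx.1
    have hcont : ContinuousOn v (Set.Icc a b) := hvcont.mono hIcc
    have : θ * δ ∈ Set.Icc (v a) (v b) := ⟨le_of_lt haθ, le_of_lt hbθ⟩
    obtain ⟨α, hαmem, hαv⟩ := intermediate_value_Icc (le_of_lt hba) hcont this
    exact ⟨α, lt_of_lt_of_le ha hαmem.1, hαv⟩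
  obtain ⟨α, hα, hαv⟩ := hex
  refine ⟨α, ⟨hα, hαv⟩, ?_⟩
  rintro β ⟨hβ, hβv⟩
  exact hvmono.injOn (Set.mem_Ioi.mpr hβ) (Set.mem_Ioi.mpr hα) (by rw [hβv, hαv])
end
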